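/- Let π be a permutation of {1,…,n}, let RB be its set of run bottoms and RT its set of run tops. Then there exists a unique bijection σ_e from {1,…,n}∖RT to {1,…,n}∖RB whose multiset of inversion bottoms {{σ_e(j) : i < j, both in the domain, σ_e(i) > σ_e(j)}} equals the multiset of those descent views of π that are not run bottoms. Moreover, this bijection satisfies σ_e(i) > i for every i in {1,…,n}∖RT. -/

import Mathlib

open Finset
open scoped Classical

variable {n : ℕ}

/-- `π` has a descent at (0-based) position `k`. -/
def IsDesc (π : Equiv.Perm (Fin n)) (k : ℕ) : Prop :=
  ∃ hk : k + 1 < n, π ⟨k + 1, hk⟩ < π ⟨k, Nat.lt_of_succ_lt hk⟩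

/-- Positions `i ≤ j` lie in the same descending run of `π`:
every step between them is a descent. -/
def SameRunLe (π : Equiv.Perm (Fin n)) (i j : Fin n) : Prop :=
  i ≤ j ∧ ∀ k : ℕ, i.val ≤ k → k < j.val → IsDesc π k

/-- The first position of the descending run containing position `p`. -/
noncomputable def runStartPos (π : Equiv.Perm (Fin n)) (p : Fin n) : Fin n :=
  (Finset.univ.filter fun a => SameRunLe π a p).min'
    ⟨p, Finset.mem_filter.mpr ⟨Finset.mem_univ p,
      le_refl p, fun k hk hk' => absurd hk' (Nat.not_lt.mpr hk)⟩⟩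

/-- The last position of the descending run containing position `p`. -/
noncomputable def runEndPos (π : Equiv.Perm (Fin n)) (p : Fin n) : Fin n :=
  (Finset.univ.filter fun b => SameRunLe π p b).max'
    ⟨p, Finset.mem_filter.mpr ⟨Finset.mem_univ p,
      le_refl p, fun k hk hk' => absurd hk' (Nat.not_lt.mpr hk)⟩⟩

/-- The run top (largest value) of the descending run of `π` containing the value `v`. -/
noncomputable def runTopVal (π : Equiv.Perm (Fin n)) (v : Fin n) : Fin n :=
  π (runStartPos π (π.symm v))

/-- The run bottom (smallest value) of the descending run of `π` containing the value `v`. -/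
noncomputable def runBotVal (π : Equiv.Perm (Fin n)) (v : Fin n) : Fin n :=
  π (runEndPos π (π.symm v))

/-- The set of run tops of `π`. -/
noncomputable def RT (π : Equiv.Perm (Fin n)) : Finset (Fin n) :=
  Finset.univ.filter fun v => runTopVal π v = v

/-- The set of run bottoms of `π`. -/
noncomputable def RB (π : Equiv.Perm (Fin n)) : Finset (Fin n) :=
  Finset.univ.filter fun v => runBotVal π v = v

/-- The descending run of `π` containing the value `v`, as a set of values. -/
noncomputable def runOf (π : Equiv.Perm (Fin n)) (v : Fin n) : Finset (Fin n) :=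
  Finset.univ.filter fun w => runStartPos π (π.symm w) = runStartPos π (π.symm v)

/-- The set of descending runs of `π`, each run regarded as a set of values. -/
noncomputable def runsSet (π : Equiv.Perm (Fin n)) : Finset (Finset (Fin n)) :=
  Finset.univ.image (runOf π)

/-- The set `31∗2(π)`: pairs `(i,j)` with `i+1 < j`, `π i > π j > π (i+1)`, and the run
bottom of the run containing `π i` (and `π (i+1)`) smaller than the run bottom of
the run containing `π j`. -/
noncomputable def Pat31s2 (π : Equiv.Perm (Fin n)) : Finset (Fin n × Fin n) :=
  Finset.univ.filter fun p => ∃ h : p.1.val + 1 < n,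
    p.1.val + 1 < p.2.val ∧ π p.2 < π p.1 ∧ π ⟨p.1.val + 1, h⟩ < π p.2 ∧
    runBotVal π (π p.1) < runBotVal π (π p.2)

/-- The multiset of descent views of `π`. -/
noncomputable def dvM (π : Equiv.Perm (Fin n)) : Multiset (Fin n) :=
  (Pat31s2 π).val.map fun p => π p.2

/-- Invisible inversions of `σ`: pairs `(i,j)` with `i < j` and `σ i > σ j > i`. -/
def invisibleInversions (σ : Equiv.Perm (Fin n)) : Finset (Fin n × Fin n) :=
  Finset.univ.filter fun p => p.1 < p.2 ∧ σ p.2 < σ p.1 ∧ p.1 < σ p.2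

/-- The multiset of invisible inversion bottoms of `σ`. -/
def invInvBottoms (σ : Equiv.Perm (Fin n)) : Multiset (Fin n) :=
  (invisibleInversions σ).val.map fun p => σ p.2

/-- The set of positions of weak deficiencies of `σ`. -/
def weakDefPos (σ : Equiv.Perm (Fin n)) : Finset (Fin n) :=
  Finset.univ.filter fun i => σ i ≤ i

/-- The set of values of weak deficiencies of `σ`. -/
def weakDefVals (σ : Equiv.Perm (Fin n)) : Finset (Fin n) :=
  (weakDefPos σ).image σ

/-- Global ascents of `π`, as 1-based indices `m ∈ {1,…,n}`: `π` restricted to the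
first `m` positions is a permutation of the smallest `m` values. -/
def globalAscents (π : Equiv.Perm (Fin n)) : Finset ℕ :=
  (Finset.Icc 1 n).filter fun m => ∀ i : Fin n, i.val < m → (π i).val < m

/-- The set of left-to-right maxima (as values) of `π`. -/
def lrMax (π : Equiv.Perm (Fin n)) : Finset (Fin n) :=
  Finset.univ.filter fun v => ∀ i : Fin n, i < π.symm v → π i < v

/-- The set of maximal elements of the cycles of `σ`. -/
noncomputable def cycleMaxes (σ : Equiv.Perm (Fin n)) : Finset (Fin n) :=
  Finset.univ.filter fun v => ∀ w : Fin n, σ.SameCycle v w → w ≤ v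

/-- The one-line notation of `π` (0-based values). -/
def oneLine (π : Equiv.Perm (Fin n)) : List ℕ :=
  (List.finRange n).map fun i => (π i : ℕ)

/-- Helper for splitting a list into maximal ascending runs. -/
def addRun (x : ℕ) : List (List ℕ) → List (List ℕ)
  | [] => [[x]]
  | [] :: rest => [x] :: rest
  | (y :: r) :: rest =>
      if x < y then (x :: y :: r) :: rest else [x] :: (y :: r) :: rest

/-- Split a list into its maximal ascending runs. -/
def splitAscRuns (l : List ℕ) : List (List ℕ) := l.foldr addRun []

/-- Sort the ascending runs of `l` in increasing order of their minimal (= first)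
elements and concatenate. -/
def runsortL (l : List ℕ) : List ℕ :=
  ((splitAscRuns l).mergeSort fun r s => decide (r.headI ≤ s.headI)).flatten

/-- The number of occurrences of the vincular pattern `13-2` in the word `l`:
pairs `(i,j)` with `i < j` and `l i < l j < l (i+1)`. -/
def occ132 (l : List ℕ) : ℕ :=
  ((Finset.range l.length ×ˢ Finset.range l.length).filter fun p =>
    p.1 < p.2 ∧ l.getD p.1 0 < l.getD p.2 0 ∧ l.getD p.2 0 < l.getD (p.1 + 1) 0).card

/-- The multiset of inversion bottoms of a bijection from `{1,…,n}∖RT` to `{1,…,n}∖RB`. -/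
noncomputable def invBottomsE (π : Equiv.Perm (Fin n))
    (f : {x : Fin n // x ∉ RT π} ≃ {x : Fin n // x ∉ RB π}) : Multiset (Fin n) :=
  ((Finset.univ :
      Finset ({x : Fin n // x ∉ RT π} × {x : Fin n // x ∉ RT π})).filter fun p =>
    (p.1 : Fin n) < (p.2 : Fin n) ∧ (f p.2 : Fin n) < (f p.1 : Fin n)).val.map
    fun p => (f p.2 : Fin n)

/-- The multiset of descent views of `π` which are not run bottoms. -/
noncomputable def dvNotRB (π : Equiv.Perm (Fin n)) : Multiset (Fin n) :=
  (dvM π).filter fun v => v ∉ RB π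

/-- `f` is the bijection `χ_e(π)`: its multiset of inversion bottoms is the multiset of
descent views of `π` which are not run bottoms. -/
def IsChiE (π : Equiv.Perm (Fin n))
    (f : {x : Fin n // x ∉ RT π} ≃ {x : Fin n // x ∉ RB π}) : Prop :=
  invBottomsE π f = dvNotRB π

/-- The graph of the partial bijection `f`. -/
noncomputable def chiEGraph (π : Equiv.Perm (Fin n))
    (f : {x : Fin n // x ∉ RT π} ≃ {x : Fin n // x ∉ RB π}) : Finset (Fin n × Fin n) :=
  Finset.univ.image fun x : {x : Fin n // x ∉ RT π} => ((x : Fin n), (f x : Fin n))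

/-- The number of cycles (orbits) of `σ`. -/
noncomputable def numCycles (σ : Equiv.Perm (Fin n)) : ℕ :=
  σ.cycleType.card + (Finset.univ.filter fun v => σ v = v).card

section AUX
variable {n : ℕ}

lemma runEndPos_eq_iff (π : Equiv.Perm (Fin n)) (p : Fin n) :
    runEndPos π p = p ↔ ¬ IsDesc π p.val := by
  constructor
  · intro h hd
    obtain ⟨hk, hlt⟩ := hd
    have hq : (⟨p.val + 1, hk⟩ : Fin n) ∈ Finset.univ.filter fun b => SameRunLe π p b := by
      refine Finset.mem_filter.mpr ⟨Finset.mem_univ _, ?_, ?_⟩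
      · exact Fin.le_def.mpr (Nat.le_succ _)
      · intro k hk1 hk2
        simp only [Fin.val_mk] at hk2
        have : k = p.val := by omega
        subst this
        exact ⟨hk, hlt⟩
    have h2 : (⟨p.val + 1, hk⟩ : Fin n) ≤ runEndPos π p := Finset.le_max' _ _ hq
    rw [h] at h2
    have := Fin.le_def.mp h2
    simp only [Fin.val_mk] at this
    omega
  · intro hnd
    have hmem := Finset.max'_mem (Finset.univ.filter fun b => SameRunLe π p b)
      ⟨p, Finset.mem_filter.mpr ⟨Finset.mem_univ p,
        le_refl p, fun k hk hk' => absurd hk' (Nat.not_lt.mpr hk)⟩⟩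
    have hsr : SameRunLe π p (runEndPos π p) := (Finset.mem_filter.mp hmem).2
    rcases lt_or_eq_of_le hsr.1 with hlt | heq
    · exact absurd (hsr.2 p.val (le_refl _) (Fin.lt_def.mp hlt)) hnd
    · exact heq.symm

lemma runStartPos_eq_iff (π : Equiv.Perm (Fin n)) (p : Fin n) :
    runStartPos π p = p ↔ (p.val = 0 ∨ ¬ IsDesc π (p.val - 1)) := by
  constructor
  · intro h
    by_cases hp : p.val = 0
    · exact Or.inl hp
    · refine Or.inr fun hd => ?_
      obtain ⟨hk, hlt⟩ := hd
      have hq : (⟨p.val - 1, by omega⟩ : Fin n) ∈ Finset.univ.filter fun a => SameRunLe π a p := by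
        refine Finset.mem_filter.mpr ⟨Finset.mem_univ _, Fin.le_def.mpr ?_, ?_⟩
        · simp only [Fin.val_mk]; omega
        · intro k hk1 hk2
          simp only [Fin.val_mk] at hk1
          have : k = p.val - 1 := by omega
          subst this
          exact ⟨hk, hlt⟩
      have h2 : runStartPos π p ≤ (⟨p.val - 1, by omega⟩ : Fin n) := Finset.min'_le _ _ hq
      rw [h] at h2
      have := Fin.le_def.mp h2
      simp only [Fin.val_mk] at this
      omega
  · intro hc
    have hmem := Finset.min'_mem (Finset.univ.filter fun a => SameRunLe π a p)
      ⟨p, Finset.mem_filter.mpr ⟨Finset.mem_univ p,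
        le_refl p, fun k hk hk' => absurd hk' (Nat.not_lt.mpr hk)⟩⟩
    have hsr : SameRunLe π (runStartPos π p) p := (Finset.mem_filter.mp hmem).2
    rcases lt_or_eq_of_le hsr.1 with hlt | heq
    · rcases hc with h0 | hnd
      · have := Fin.lt_def.mp hlt; omega
      · have hx := Fin.lt_def.mp hlt
        exact absurd (hsr.2 (p.val - 1) (by omega) (by omega)) hnd
    · exact heq

lemma not_mem_RB_iff (π : Equiv.Perm (Fin n)) (v : Fin n) :
    v ∉ RB π ↔ IsDesc π (π.symm v).val := by
  have h1 : v ∈ RB π ↔ runBotVal π v = v := by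
    simp [RB]
  have h2 : runBotVal π v = v ↔ runEndPos π (π.symm v) = π.symm v := by
    unfold runBotVal
    constructor
    · intro h
      have := π.injective (a₁ := runEndPos π (π.symm v)) (a₂ := π.symm v)
      apply this
      rw [h, Equiv.apply_symm_apply]
    · intro h; rw [h, Equiv.apply_symm_apply]
  rw [h1, h2, runEndPos_eq_iff]
  tauto

lemma not_mem_RT_iff (π : Equiv.Perm (Fin n)) (v : Fin n) :
    v ∉ RT π ↔ ((π.symm v).val ≠ 0 ∧ IsDesc π ((π.symm v).val - 1)) := by
  have h1 : v ∈ RT π ↔ runTopVal π v = v := by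
    simp [RT]
  have h2 : runTopVal π v = v ↔ runStartPos π (π.symm v) = π.symm v := by
    unfold runTopVal
    constructor
    · intro h
      apply π.injective (a₁ := runStartPos π (π.symm v)) (a₂ := π.symm v)
      rw [h, Equiv.apply_symm_apply]
    · intro h; rw [h, Equiv.apply_symm_apply]
  rw [h1, h2, runStartPos_eq_iff]
  tauto

end AUX

section AUX2
variable {n : ℕ}

noncomputable def nxt (π : Equiv.Perm (Fin n)) (a : Fin n) : Fin n :=
  if h : a.val + 1 < n then π ⟨a.val + 1, h⟩ else a

noncomputable def prevVal (π : Equiv.Perm (Fin n)) (z : Fin n) : Fin n :=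
  π ⟨(π.symm z).val - 1, lt_of_le_of_lt (Nat.sub_le _ _) (π.symm z).isLt⟩

lemma nxt_spec (π : Equiv.Perm (Fin n)) {c : Fin n} (h : IsDesc π c.val) :
    ∃ hk : c.val + 1 < n, nxt π c = π ⟨c.val + 1, hk⟩ ∧ nxt π c ∉ RT π ∧
      prevVal π (nxt π c) = π c ∧ (π.symm (nxt π c)).val = c.val + 1
      ∧ nxt π c < π c := by
  obtain ⟨hk, hlt⟩ := h
  have hnxt : nxt π c = π ⟨c.val + 1, hk⟩ := dif_pos hk
  have hsymm : π.symm (nxt π c) = ⟨c.val + 1, hk⟩ := by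
    rw [hnxt, Equiv.symm_apply_apply]
  refine ⟨hk, hnxt, ?_, ?_, by rw [hsymm], by rw [hnxt]; exact hlt⟩
  · rw [not_mem_RT_iff, hsymm]
    refine ⟨by simp, ?_⟩
    simp only [Fin.val_mk, Nat.add_sub_cancel]
    exact ⟨hk, hlt⟩
  · unfold prevVal
    congr 1
    apply Fin.ext
    simp only [Fin.val_mk]
    rw [hsymm]
    simp

lemma prev_spec (π : Equiv.Perm (Fin n)) {x : Fin n} (hx : x ∉ RT π) :
    prevVal π x ∉ RB π ∧ x < prevVal π x ∧ nxt π (π.symm (prevVal π x)) = x := by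
  rw [not_mem_RT_iff] at hx
  obtain ⟨hp0, hd⟩ := hx
  set p := π.symm x with hpdef
  set c : Fin n := ⟨p.val - 1, lt_of_le_of_lt (Nat.sub_le _ _) p.isLt⟩ with hc
  have hdc : IsDesc π c.val := hd
  obtain ⟨hk, hlt⟩ := hd
  have hprev : prevVal π x = π c := rfl
  have hsymmc : π.symm (prevVal π x) = c := by rw [hprev, Equiv.symm_apply_apply]
  have hp1 : p.val ≠ 0 := hp0
  have hxeq : π ⟨p.val - 1 + 1, hk⟩ = x := by
    have : (⟨p.val - 1 + 1, hk⟩ : Fin n) = p := Fin.ext (by simp only [Fin.val_mk]; omega)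
    rw [this, hpdef, Equiv.apply_symm_apply]
  refine ⟨?_, ?_, ?_⟩
  · rw [not_mem_RB_iff, hprev, Equiv.symm_apply_apply]
    exact hdc
  · rw [hprev, ← hxeq]
    exact hlt
  · rw [hsymmc]
    obtain ⟨hk', hn', _, _, _, _⟩ := nxt_spec π hdc
    rw [hn', ← hxeq]

lemma card_AB (π : Equiv.Perm (Fin n)) :
    (Finset.univ.filter fun x => x ∉ RT π).card
      = (Finset.univ.filter fun x => x ∉ RB π).card := by
  apply le_antisymm
  · apply Finset.card_le_card_of_injOn (prevVal π)
    · intro x hx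
      rw [Finset.mem_coe, Finset.mem_filter] at hx ⊢
      exact ⟨Finset.mem_univ _, (prev_spec π hx.2).1⟩
    · intro x hx x' hx' h
      rw [Finset.mem_coe, Finset.mem_filter] at hx hx'
      have h1 := (prev_spec π hx.2).2.2
      have h2 := (prev_spec π hx'.2).2.2
      rw [← h1, ← h2, h]
  · apply Finset.card_le_card_of_injOn (fun w => nxt π (π.symm w))
    · intro w hw
      rw [Finset.mem_coe, Finset.mem_filter] at hw ⊢
      have hd : IsDesc π (π.symm w).val := (not_mem_RB_iff π w).mp hw.2
      obtain ⟨_, _, hrt, _, _, _⟩ := nxt_spec π hd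
      exact ⟨Finset.mem_univ _, hrt⟩
    · intro w hw w' hw' h
      rw [Finset.mem_coe, Finset.mem_filter] at hw hw'
      have hd : IsDesc π (π.symm w).val := (not_mem_RB_iff π w).mp hw.2
      have hd' : IsDesc π (π.symm w').val := (not_mem_RB_iff π w').mp hw'.2
      obtain ⟨_, _, _, hq1, _, _⟩ := nxt_spec π hd
      obtain ⟨_, _, _, hq2, _, _⟩ := nxt_spec π hd'
      have h' : nxt π (π.symm w) = nxt π (π.symm w') := h
      have : π (π.symm w) = π (π.symm w') := by
        rw [← hq1, ← hq2, h']
      simpa using this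

end AUX2

section GEN
variable {n : ℕ}

def BijOnF (f : Fin n → Fin n) (A B : Finset (Fin n)) : Prop :=
  (∀ a ∈ A, f a ∈ B) ∧ (∀ a ∈ A, ∀ b ∈ A, f a = f b → a = b) ∧ (∀ b ∈ B, ∃ a ∈ A, f a = b)

noncomputable def invBotF (A : Finset (Fin n)) (f : Fin n → Fin n) : Multiset (Fin n) :=
  ((A ×ˢ A).filter fun p => p.1 < p.2 ∧ f p.2 < f p.1).val.map fun p => f p.2

lemma count_invBotF (A : Finset (Fin n)) (f : Fin n → Fin n) (v : Fin n) :
    (invBotF A f).count v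
      = ((A ×ˢ A).filter fun p => p.1 < p.2 ∧ f p.2 < f p.1 ∧ f p.2 = v).card := by
  unfold invBotF
  rw [Multiset.count_map]
  rw [← Finset.filter_val, Finset.filter_filter]
  rw [Finset.card_def]
  congr 1
  apply congrArg
  apply Finset.filter_congr
  intro p _
  constructor
  · rintro ⟨⟨h1,h2⟩,h3⟩; exact ⟨h1,h2,h3.symm⟩
  · rintro ⟨h1,h2,h3⟩; exact ⟨⟨h1,h2⟩,h3.symm⟩

lemma rank_lt_rank (C : Finset (Fin n)) {a b : Fin n} (ha : a ∈ C) (hab : a < b) :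
    (C.filter (· < a)).card < (C.filter (· < b)).card := by
  apply Finset.card_lt_card
  constructor
  · intro x hx
    rw [Finset.mem_filter] at hx ⊢
    exact ⟨hx.1, lt_trans hx.2 hab⟩
  · intro hsub
    have : a ∈ C.filter (· < a) := hsub (Finset.mem_filter.mpr ⟨ha, hab⟩)
    simp at this

lemma rank_injOn (C : Finset (Fin n)) {a b : Fin n} (ha : a ∈ C) (hb : b ∈ C)
    (h : (C.filter (· < a)).card = (C.filter (· < b)).card) : a = b := by
  rcases lt_trichotomy a b with hlt | heq | hgt
  · exact absurd h (Nat.ne_of_lt (rank_lt_rank C ha hlt))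
  · exact heq
  · exact absurd h.symm (Nat.ne_of_lt (rank_lt_rank C hb hgt))

lemma rank_surj (C : Finset (Fin n)) (m : ℕ) (hm : m < C.card) :
    ∃ a ∈ C, (C.filter (· < a)).card = m := by
  have hsub : C.image (fun a => (C.filter (· < a)).card) ⊆ Finset.range C.card := by
    intro x hx
    rw [Finset.mem_image] at hx
    obtain ⟨a, ha, rfl⟩ := hx
    rw [Finset.mem_range]
    calc (C.filter (· < a)).card ≤ (C.erase a).card := by
          apply Finset.card_le_card
          intro x hx
          rw [Finset.mem_filter] at hx
          exact Finset.mem_erase.mpr ⟨ne_of_lt hx.2, hx.1⟩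
      _ < C.card := Finset.card_erase_lt_of_mem ha
  have hinj : Set.InjOn (fun a => (C.filter (· < a)).card) C := by
    intro a ha b hb h
    exact rank_injOn C ha hb h
  have hcard : (C.image (fun a => (C.filter (· < a)).card)).card = C.card := by
    rw [Finset.card_image_of_injOn hinj]
  have heq : C.image (fun a => (C.filter (· < a)).card) = Finset.range C.card := by
    apply Finset.eq_of_subset_of_card_le hsub
    rw [hcard, Finset.card_range]
  have : m ∈ C.image (fun a => (C.filter (· < a)).card) := by
    rw [heq]; exact Finset.mem_range.mpr hm
  rw [Finset.mem_image] at this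
  obtain ⟨a, ha, h⟩ := this
  exact ⟨a, ha, h⟩

lemma invBotF_congr (A : Finset (Fin n)) (f g : Fin n → Fin n)
    (h : ∀ a ∈ A, f a = g a) : invBotF A f = invBotF A g := by
  unfold invBotF
  have hfil : ((A ×ˢ A).filter fun p => p.1 < p.2 ∧ f p.2 < f p.1)
      = ((A ×ˢ A).filter fun p => p.1 < p.2 ∧ g p.2 < g p.1) := by
    apply Finset.filter_congr
    intro p hp
    rw [Finset.mem_product] at hp
    rw [h p.1 hp.1, h p.2 hp.2]
  rw [hfil]
  apply Multiset.map_congr rfl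
  intro p hp
  rw [Finset.mem_val, Finset.mem_filter, Finset.mem_product] at hp
  exact h p.2 hp.1.2

lemma bijOnF_erase {A B : Finset (Fin n)} {f : Fin n → Fin n} (hf : BijOnF f A B)
    {a0 : Fin n} (ha0 : a0 ∈ A) : BijOnF f (A.erase a0) (B.erase (f a0)) := by
  obtain ⟨hmap, hinj, hsurj⟩ := hf
  refine ⟨?_, ?_, ?_⟩
  · intro a ha
    rw [Finset.mem_erase] at ha ⊢
    exact ⟨fun h => ha.1 (hinj a ha.2 a0 ha0 h), hmap a ha.2⟩
  · intro a ha b hb h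
    exact hinj a (Finset.mem_of_mem_erase ha) b (Finset.mem_of_mem_erase hb) h
  · intro b hb
    rw [Finset.mem_erase] at hb
    obtain ⟨a, ha, rfl⟩ := hsurj b hb.2
    exact ⟨a, Finset.mem_erase.mpr ⟨fun h => hb.1 (by rw [h]), ha⟩, rfl⟩

lemma count_invBotF_min {A B : Finset (Fin n)} {f : Fin n → Fin n} (hf : BijOnF f A B)
    (hB : B.Nonempty) {a0 : Fin n} (ha0 : a0 ∈ A) (hfa0 : f a0 = B.min' hB) :
    (invBotF A f).count (B.min' hB) = (A.filter (· < a0)).card := by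
  obtain ⟨hmap, hinj, hsurj⟩ := hf
  rw [count_invBotF]
  apply Finset.card_bij (fun p _ => p.1)
  · intro p hp
    rw [Finset.mem_filter, Finset.mem_product] at hp
    obtain ⟨⟨hp1, hp2⟩, hlt, hflt, hfv⟩ := hp
    have hp2a0 : p.2 = a0 := hinj p.2 hp2 a0 ha0 (by rw [hfv, hfa0])
    rw [Finset.mem_filter]
    exact ⟨hp1, by rw [← hp2a0]; exact hlt⟩
  · intro p hp q hq h
    rw [Finset.mem_filter, Finset.mem_product] at hp hq
    have hp2 : p.2 = a0 := hinj p.2 hp.1.2 a0 ha0 (by rw [hp.2.2.2, hfa0])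
    have hq2 : q.2 = a0 := hinj q.2 hq.1.2 a0 ha0 (by rw [hq.2.2.2, hfa0])
    exact Prod.ext h (by rw [hp2, hq2])
  · intro q hq
    rw [Finset.mem_filter] at hq
    refine ⟨(q, a0), ?_, rfl⟩
    rw [Finset.mem_filter, Finset.mem_product]
    have hfq : f a0 < f q := by
      rw [hfa0]
      apply lt_of_le_of_ne (Finset.min'_le _ _ (hmap q hq.1))
      intro h
      have : q = a0 := hinj q hq.1 a0 ha0 (by rw [← h, hfa0])
      exact absurd hq.2 (by rw [this]; exact lt_irrefl a0)
    exact ⟨⟨hq.1, ha0⟩, hq.2, hfq, hfa0⟩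

lemma peel {A B : Finset (Fin n)} {f : Fin n → Fin n} (hf : BijOnF f A B)
    (hB : B.Nonempty) {a0 : Fin n} (ha0 : a0 ∈ A) (hfa0 : f a0 = B.min' hB) :
    invBotF A f = invBotF (A.erase a0) f
      + Multiset.replicate ((A.filter (· < a0)).card) (B.min' hB) := by
  obtain ⟨hmap, hinj, hsurj⟩ := hf
  ext v
  rw [Multiset.count_add, Multiset.count_replicate]
  by_cases hv : v = B.min' hB
  · subst hv
    rw [if_pos rfl, count_invBotF_min ⟨hmap, hinj, hsurj⟩ hB ha0 hfa0]
    have hzero : (invBotF (A.erase a0) f).count (B.min' hB) = 0 := by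
      rw [count_invBotF, Finset.card_eq_zero, Finset.filter_eq_empty_iff]
      intro p hp
      simp only [Finset.mem_product, Finset.mem_erase] at hp
      rintro ⟨-, -, hfv⟩
      exact hp.2.1 (hinj p.2 hp.2.2 a0 ha0 (by rw [hfv, hfa0]))
    rw [hzero, zero_add]
  · rw [if_neg (fun h => hv h.symm), add_zero, count_invBotF, count_invBotF]
    congr 1
    ext p
    rw [Finset.mem_filter, Finset.mem_filter, Finset.mem_product, Finset.mem_product,
      Finset.mem_erase, Finset.mem_erase]
    constructor
    · rintro ⟨⟨hp1, hp2⟩, hlt, hflt, hfv⟩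
      have hp2ne : p.2 ≠ a0 := by
        intro h
        exact hv (by rw [← hfv, h, hfa0])
      have hp1ne : p.1 ≠ a0 := by
        intro h
        have : f p.1 = B.min' hB := by rw [h, hfa0]
        have hle := Finset.min'_le B (f p.2) (hmap p.2 hp2)
        rw [← this] at hle
        exact absurd hflt (not_lt.mpr hle)
      exact ⟨⟨⟨hp1ne, hp1⟩, ⟨hp2ne, hp2⟩⟩, hlt, hflt, hfv⟩
    · rintro ⟨⟨⟨-, hp1⟩, ⟨-, hp2⟩⟩, hc⟩
      exact ⟨⟨hp1, hp2⟩, hc⟩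

lemma keyuniq : ∀ (N : ℕ) (A B : Finset (Fin n)) (f g : Fin n → Fin n),
    A.card = N → A.card = B.card → BijOnF f A B → BijOnF g A B →
    invBotF A f = invBotF A g → ∀ a ∈ A, f a = g a := by
  intro N
  induction N with
  | zero =>
    intro A B f g hN _ _ _ _ a ha
    rw [Finset.card_eq_zero] at hN
    subst hN
    exact absurd ha (Finset.notMem_empty a)
  | succ N ih =>
    intro A B f g hN hAB hf hg heq a ha
    have hB : B.Nonempty := by
      rw [← Finset.card_pos, ← hAB, hN]; omega
    set v0 := B.min' hB with hv0
    obtain ⟨af, haf, hfaf⟩ := hf.2.2 v0 (Finset.min'_mem B hB)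
    obtain ⟨ag, hag, hgag⟩ := hg.2.2 v0 (Finset.min'_mem B hB)
    have hcf := count_invBotF_min hf hB haf hfaf
    have hcg := count_invBotF_min hg hB hag hgag
    have hafag : af = ag := by
      apply rank_injOn A haf hag
      rw [← hcf, ← hcg, heq]
    subst hafag
    have hpf := peel hf hB haf hfaf
    have hpg := peel hg hB haf hgag
    have hcancel : invBotF (A.erase af) f = invBotF (A.erase af) g := by
      have : invBotF (A.erase af) f + Multiset.replicate ((A.filter (· < af)).card) v0
          = invBotF (A.erase af) g + Multiset.replicate ((A.filter (· < af)).card) v0 := by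
        rw [← hpf, ← hpg, heq]
      exact add_right_cancel this
    have hrf : BijOnF f (A.erase af) (B.erase v0) := by
      have := bijOnF_erase hf haf
      rwa [hfaf] at this
    have hrg : BijOnF g (A.erase af) (B.erase v0) := by
      have := bijOnF_erase hg haf
      rwa [hgag] at this
    by_cases hcase : a = af
    · rw [hcase, hfaf, hgag]
    · exact ih (A.erase af) (B.erase v0) f g
        (by rw [Finset.card_erase_of_mem haf, hN]; omega)
        (by rw [Finset.card_erase_of_mem haf, Finset.card_erase_of_mem (Finset.min'_mem B hB), hAB])
        hrf hrg hcancel a (Finset.mem_erase.mpr ⟨hcase, ha⟩)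

lemma keyexists : ∀ (N : ℕ) (A B : Finset (Fin n)) (M : Multiset (Fin n)),
    A.card = N → A.card = B.card → (∀ v ∈ M, v ∈ B) →
    (∀ v ∈ B, M.count v + (B.filter (· ≤ v)).card ≤ (A.filter (· < v)).card) →
    ∃ f : Fin n → Fin n, BijOnF f A B ∧ invBotF A f = M ∧ ∀ a ∈ A, a < f a := by
  intro N
  induction N with
  | zero =>
    intro A B M hN hAB hsupp _
    rw [Finset.card_eq_zero] at hN
    subst hN
    have hBe : B = ∅ := by
      rw [← Finset.card_eq_zero, ← hAB, Finset.card_empty]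
    subst hBe
    have hM : M = 0 := by
      rw [Multiset.eq_zero_iff_forall_notMem]
      intro v hv
      exact absurd (hsupp v hv) (Finset.notMem_empty v)
    refine ⟨id, ⟨?_, ?_, ?_⟩, ?_, ?_⟩ <;>
      simp [invBotF, hM]
  | succ N ih =>
    intro A B M hN hAB hsupp hineq
    have hB : B.Nonempty := by
      rw [← Finset.card_pos, ← hAB, hN]; omega
    set v0 := B.min' hB with hv0
    have hv0B : v0 ∈ B := Finset.min'_mem B hB
    set m := M.count v0 with hm
    have hBfilt : 1 ≤ (B.filter (· ≤ v0)).card := by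
      rw [Nat.one_le_iff_ne_zero, ← Nat.pos_iff_ne_zero, Finset.card_pos]
      exact ⟨v0, Finset.mem_filter.mpr ⟨hv0B, le_refl v0⟩⟩
    have hmK : m < (A.filter (· < v0)).card := by
      have := hineq v0 hv0B
      omega
    obtain ⟨a0, ha0C, ha0rank⟩ := rank_surj (A.filter (· < v0)) m hmK
    rw [Finset.mem_filter] at ha0C
    obtain ⟨ha0A, ha0v0⟩ := ha0C
    have hrank : (A.filter (· < a0)).card = m := by
      rw [← ha0rank]
      congr 1
      ext x
      simp only [Finset.mem_filter]
      constructor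
      · rintro ⟨hx, hxa⟩
        exact ⟨⟨hx, lt_trans hxa ha0v0⟩, hxa⟩
      · rintro ⟨⟨hx, -⟩, hxa⟩
        exact ⟨hx, hxa⟩
    -- apply IH
    have hcardA' : (A.erase a0).card = N := by
      rw [Finset.card_erase_of_mem ha0A, hN]
      omega

    have hcardB' : (A.erase a0).card = (B.erase v0).card := by
      rw [Finset.card_erase_of_mem ha0A, Finset.card_erase_of_mem hv0B, hAB]
    have hsupp' : ∀ v ∈ M.filter (· ≠ v0), v ∈ B.erase v0 := by
      intro v hv
      rw [Multiset.mem_filter] at hv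
      exact Finset.mem_erase.mpr ⟨hv.2, hsupp v hv.1⟩
    have hineq' : ∀ v ∈ B.erase v0,
        (M.filter (· ≠ v0)).count v + ((B.erase v0).filter (· ≤ v)).card
          ≤ ((A.erase a0).filter (· < v)).card := by
      intro v hv
      rw [Finset.mem_erase] at hv
      have hv0v : v0 ≤ v := Finset.min'_le B v hv.2
      have hcnt : (M.filter (· ≠ v0)).count v = M.count v := by
        rw [Multiset.count_filter, if_pos hv.1]
      have hBv : ((B.erase v0).filter (· ≤ v)) = (B.filter (· ≤ v)).erase v0 := by
        ext x
        simp only [Finset.mem_filter, Finset.mem_erase]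
        tauto
      have hAv : ((A.erase a0).filter (· < v)) = (A.filter (· < v)).erase a0 := by
        ext x
        simp only [Finset.mem_filter, Finset.mem_erase]
        tauto
      have hv0mem : v0 ∈ B.filter (· ≤ v) := Finset.mem_filter.mpr ⟨hv0B, hv0v⟩
      have ha0mem : a0 ∈ A.filter (· < v) := Finset.mem_filter.mpr ⟨ha0A, lt_of_lt_of_le ha0v0 hv0v⟩
      rw [hcnt, hBv, hAv, Finset.card_erase_of_mem hv0mem, Finset.card_erase_of_mem ha0mem]
      have h1 := hineq v hv.2
      have h2 : 1 ≤ (B.filter (· ≤ v)).card := by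
        rw [Nat.one_le_iff_ne_zero, ← Nat.pos_iff_ne_zero, Finset.card_pos]
        exact ⟨v0, hv0mem⟩
      have h3 : 1 ≤ (A.filter (· < v)).card := by
        rw [Nat.one_le_iff_ne_zero, ← Nat.pos_iff_ne_zero, Finset.card_pos]
        exact ⟨a0, ha0mem⟩
      omega
    obtain ⟨f', hbij', hinv', hgt'⟩ := ih (A.erase a0) (B.erase v0) (M.filter (· ≠ v0))
      hcardA' hcardB' hsupp' hineq'
    set f : Fin n → Fin n := fun x => if x = a0 then v0 else f' x with hfdef
    have hfa0 : f a0 = v0 := by simp [hfdef]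
    have hfne : ∀ x, x ≠ a0 → f x = f' x := by
      intro x hx; simp [hfdef, hx]
    have hbij : BijOnF f A B := by
      refine ⟨?_, ?_, ?_⟩
      · intro a ha
        by_cases h : a = a0
        · rw [h, hfa0]; exact hv0B
        · rw [hfne a h]
          exact Finset.mem_of_mem_erase (hbij'.1 a (Finset.mem_erase.mpr ⟨h, ha⟩))
      · intro a ha b hb h
        by_cases h1 : a = a0 <;> by_cases h2 : b = a0
        · rw [h1, h2]
        · exfalso
          rw [h1, hfa0, hfne b h2] at h
          have := hbij'.1 b (Finset.mem_erase.mpr ⟨h2, hb⟩)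
          rw [← h] at this
          exact Finset.notMem_erase v0 B this
        · exfalso
          rw [h2, hfa0, hfne a h1] at h
          have := hbij'.1 a (Finset.mem_erase.mpr ⟨h1, ha⟩)
          rw [h] at this
          exact Finset.notMem_erase v0 B this
        · rw [hfne a h1, hfne b h2] at h
          exact hbij'.2.1 a (Finset.mem_erase.mpr ⟨h1, ha⟩) b (Finset.mem_erase.mpr ⟨h2, hb⟩) h
      · intro b hb
        by_cases h : b = v0
        · exact ⟨a0, ha0A, by rw [hfa0, h]⟩
        · obtain ⟨a, ha, hfa⟩ := hbij'.2.2 b (Finset.mem_erase.mpr ⟨h, hb⟩)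
          rw [Finset.mem_erase] at ha
          exact ⟨a, ha.2, by rw [hfne a ha.1, hfa]⟩
    have hinvA' : invBotF (A.erase a0) f = M.filter (· ≠ v0) := by
      rw [invBotF_congr (A.erase a0) f f' (fun a ha => hfne a (Finset.mem_erase.mp ha).1)]
      exact hinv'
    have hinv : invBotF A f = M := by
      rw [peel hbij hB ha0A hfa0, hinvA', hrank]
      ext v
      rw [Multiset.count_add, Multiset.count_filter, Multiset.count_replicate]
      by_cases h : v = v0
      · subst h
        rw [if_neg (by simp), if_pos hv0.symm, zero_add]
      · rw [if_pos h, if_neg (fun hh => h hh.symm), add_zero]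
    refine ⟨f, hbij, hinv, ?_⟩
    intro a ha
    by_cases h : a = a0
    · rw [h, hfa0]; exact ha0v0
    · rw [hfne a h]
      exact hgt' a (Finset.mem_erase.mpr ⟨h, ha⟩)

end GEN

section AUX3
variable {n : ℕ}

lemma count_dvNotRB (π : Equiv.Perm (Fin n)) {v : Fin n} (hv : v ∉ RB π) :
    (dvNotRB π).count v = ((Pat31s2 π).filter fun p => v = π p.2).card := by
  unfold dvNotRB dvM
  rw [Multiset.count_filter, if_pos hv, Multiset.count_map, ← Finset.filter_val]
  rfl

lemma main_ineq (π : Equiv.Perm (Fin n)) {v : Fin n}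
    (hv : v ∈ Finset.univ.filter (fun x => x ∉ RB π)) :
    (dvNotRB π).count v
      + ((Finset.univ.filter (fun x => x ∉ RB π)).filter (· ≤ v)).card
      ≤ ((Finset.univ.filter (fun x => x ∉ RT π)).filter (· < v)).card := by
  rw [Finset.mem_filter] at hv
  have hvRB : v ∉ RB π := hv.2
  set A := Finset.univ.filter (fun x => x ∉ RT π) with hA
  set B := Finset.univ.filter (fun x => x ∉ RB π) with hB
  set Z := A.filter (· < v) with hZ
  set Z1 := Z.filter (fun z => v < prevVal π z) with hZ1
  set Z2 := Z.filter (fun z => ¬ v < prevVal π z) with hZ2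
  have hsplit : Z1.card + Z2.card = Z.card :=
    Finset.card_filter_add_card_filter_not (fun z => v < prevVal π z)
  have hX : ((Pat31s2 π).filter fun p => v = π p.2).card ≤ Z1.card := by
    apply Finset.card_le_card_of_injOn (fun p => nxt π p.1)
    · intro p hp
      rw [Finset.mem_coe, Finset.mem_filter] at hp
      obtain ⟨hpat, hpv⟩ := hp
      have hpat' := (Finset.mem_filter.mp hpat).2
      obtain ⟨h, hab, h31, h2, hrb⟩ := hpat'
      have hd : IsDesc π p.1.val := ⟨h, lt_trans h2 h31⟩
      obtain ⟨hk, hnxt, hrt, hprev, hsv, hlt⟩ := nxt_spec π hd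
      rw [Finset.mem_coe, hZ1, hZ, Finset.mem_filter, Finset.mem_filter, hA, Finset.mem_filter]
      dsimp only
      refine ⟨⟨⟨Finset.mem_univ _, hrt⟩, ?_⟩, ?_⟩
      · rw [hnxt, hpv]
        exact h2
      · rw [hprev, hpv]
        exact h31
    · intro p hp p' hp' heq
      rw [Finset.mem_coe, Finset.mem_filter] at hp hp'
      obtain ⟨h, _, _, _, _⟩ := (Finset.mem_filter.mp hp.1).2
      obtain ⟨h', _, _, _, _⟩ := (Finset.mem_filter.mp hp'.1).2
      have hd : IsDesc π p.1.val := by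
        obtain ⟨hh, hab, h31, h2, hrb⟩ := (Finset.mem_filter.mp hp.1).2
        exact ⟨hh, lt_trans h2 h31⟩
      have hd' : IsDesc π p'.1.val := by
        obtain ⟨hh, hab, h31, h2, hrb⟩ := (Finset.mem_filter.mp hp'.1).2
        exact ⟨hh, lt_trans h2 h31⟩
      obtain ⟨hk, hnxt, _, _, _, _⟩ := nxt_spec π hd
      obtain ⟨hk', hnxt', _, _, _, _⟩ := nxt_spec π hd'
      have heq' : nxt π p.1 = nxt π p'.1 := heq
      rw [hnxt, hnxt'] at heq'
      have h1 : p.1 = p'.1 := by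
        have h0 := π.injective heq'
        have h0' : p.1.val + 1 = p'.1.val + 1 := Fin.mk.inj_iff.mp h0
        exact Fin.ext (by omega)
      have h2 : p.2 = p'.2 := by
        apply π.injective
        rw [← hp.2, ← hp'.2]
      exact Prod.ext h1 h2
  have hY : (B.filter (· ≤ v)).card ≤ Z2.card := by
    apply Finset.card_le_card_of_injOn (fun w => nxt π (π.symm w))
    · intro w hw
      rw [Finset.mem_coe, Finset.mem_filter, hB, Finset.mem_filter] at hw
      obtain ⟨⟨-, hwRB⟩, hwv⟩ := hw
      have hd : IsDesc π (π.symm w).val := (not_mem_RB_iff π w).mp hwRB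
      obtain ⟨hk, hnxt, hrt, hprev, hsv, hlt⟩ := nxt_spec π hd
      have hπw : π (π.symm w) = w := Equiv.apply_symm_apply π w
      rw [Finset.mem_coe, hZ2, hZ, Finset.mem_filter, Finset.mem_filter, hA, Finset.mem_filter]
      refine ⟨⟨⟨Finset.mem_univ _, hrt⟩, ?_⟩, ?_⟩
      · calc nxt π (π.symm w) < π (π.symm w) := hlt
          _ = w := hπw
          _ ≤ v := hwv
      · rw [not_lt, hprev, hπw]
        exact hwv
    · intro w hw w' hw' heq
      rw [Finset.mem_coe, Finset.mem_filter, hB, Finset.mem_filter] at hw hw'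
      have hd : IsDesc π (π.symm w).val := (not_mem_RB_iff π w).mp hw.1.2
      have hd' : IsDesc π (π.symm w').val := (not_mem_RB_iff π w').mp hw'.1.2
      obtain ⟨_, _, _, hq1, _, _⟩ := nxt_spec π hd
      obtain ⟨_, _, _, hq2, _, _⟩ := nxt_spec π hd'
      have heq' : nxt π (π.symm w) = nxt π (π.symm w') := heq
      have : π (π.symm w) = π (π.symm w') := by
        rw [← hq1, ← hq2, heq']
      simpa using this
  rw [count_dvNotRB π hvRB]
  omega

end AUX3

section AUX4
variable {n : ℕ}

noncomputable def liftF (π : Equiv.Perm (Fin n))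
    (f : {x : Fin n // x ∉ RT π} ≃ {x : Fin n // x ∉ RB π}) : Fin n → Fin n :=
  fun x => if h : x ∉ RT π then (f ⟨x, h⟩ : Fin n) else x

lemma liftF_coe (π : Equiv.Perm (Fin n))
    (f : {x : Fin n // x ∉ RT π} ≃ {x : Fin n // x ∉ RB π})
    (x : {x : Fin n // x ∉ RT π}) : liftF π f (x : Fin n) = (f x : Fin n) := by
  unfold liftF
  rw [dif_pos x.2, Subtype.coe_eta]

lemma bijOnF_liftF (π : Equiv.Perm (Fin n))
    (f : {x : Fin n // x ∉ RT π} ≃ {x : Fin n // x ∉ RB π}) :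
    BijOnF (liftF π f) (Finset.univ.filter fun x => x ∉ RT π)
      (Finset.univ.filter fun x => x ∉ RB π) := by
  refine ⟨?_, ?_, ?_⟩
  · intro a ha
    rw [Finset.mem_filter] at ha ⊢
    have := liftF_coe π f ⟨a, ha.2⟩
    rw [this]
    exact ⟨Finset.mem_univ _, (f ⟨a, ha.2⟩).2⟩
  · intro a ha b hb h
    rw [Finset.mem_filter] at ha hb
    rw [liftF_coe π f ⟨a, ha.2⟩, liftF_coe π f ⟨b, hb.2⟩] at h
    have := f.injective (Subtype.ext h)
    exact congrArg Subtype.val this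
  · intro b hb
    rw [Finset.mem_filter] at hb
    refine ⟨(f.symm ⟨b, hb.2⟩ : Fin n), ?_, ?_⟩
    · rw [Finset.mem_filter]
      exact ⟨Finset.mem_univ _, (f.symm ⟨b, hb.2⟩).2⟩
    · rw [liftF_coe π f (f.symm ⟨b, hb.2⟩), Equiv.apply_symm_apply]

lemma bridge (π : Equiv.Perm (Fin n))
    (f : {x : Fin n // x ∉ RT π} ≃ {x : Fin n // x ∉ RB π}) :
    invBottomsE π f = invBotF (Finset.univ.filter fun x => x ∉ RT π) (liftF π f) := by
  ext v
  rw [count_invBotF]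
  unfold invBottomsE
  rw [Multiset.count_map, ← Finset.filter_val, Finset.filter_filter, Finset.card_def]
  rw [← Finset.card_def, ← Finset.card_def]
  apply Finset.card_bij (fun p _ => ((p.1 : Fin n), (p.2 : Fin n)))
  · intro p hp
    rw [Finset.mem_filter] at hp
    obtain ⟨-, ⟨hlt, hflt⟩, hv⟩ := hp
    rw [Finset.mem_filter, Finset.mem_product]
    have h1 := liftF_coe π f p.1
    have h2 := liftF_coe π f p.2
    refine ⟨⟨?_, ?_⟩, hlt, ?_, ?_⟩
    · rw [Finset.mem_filter]; exact ⟨Finset.mem_univ _, p.1.2⟩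
    · rw [Finset.mem_filter]; exact ⟨Finset.mem_univ _, p.2.2⟩
    · rw [h1, h2]; exact hflt
    · rw [h2]; exact hv.symm
  · intro p hp q hq h
    have h1 : (p.1 : Fin n) = (q.1 : Fin n) := congrArg Prod.fst h
    have h2 : (p.2 : Fin n) = (q.2 : Fin n) := congrArg Prod.snd h
    exact Prod.ext (Subtype.ext h1) (Subtype.ext h2)
  · intro q hq
    rw [Finset.mem_filter, Finset.mem_product, Finset.mem_filter, Finset.mem_filter] at hq
    obtain ⟨⟨⟨-, hq1⟩, ⟨-, hq2⟩⟩, hlt, hflt, hv⟩ := hq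
    refine ⟨(⟨q.1, hq1⟩, ⟨q.2, hq2⟩), ?_, rfl⟩
    rw [Finset.mem_filter]
    have h1 := liftF_coe π f ⟨q.1, hq1⟩
    have h2 := liftF_coe π f ⟨q.2, hq2⟩
    refine ⟨Finset.mem_univ _, ⟨hlt, ?_⟩, ?_⟩
    · rw [← h1, ← h2]; exact hflt
    · rw [← h2]; exact hv.symm

end AUX4

/-- there is a unique bijection from `{1,…,n}∖RT` to `{1,…,n}∖RB`
whose multiset of inversion bottoms is the multiset of descent views of `π` which
are not run bottoms; moreover it is strictly increasing at each point. -/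
theorem stmt4 (n : ℕ) (π : Equiv.Perm (Fin n)) :
    (∃! f : {x : Fin n // x ∉ RT π} ≃ {x : Fin n // x ∉ RB π},
        invBottomsE π f = dvNotRB π) ∧
    ∀ f : {x : Fin n // x ∉ RT π} ≃ {x : Fin n // x ∉ RB π},
      invBottomsE π f = dvNotRB π →
        ∀ x : {x : Fin n // x ∉ RT π}, (x : Fin n) < (f x : Fin n) := by
  classical
  have hsupp : ∀ v ∈ dvNotRB π, v ∈ Finset.univ.filter (fun x => x ∉ RB π) := by
    intro v hv
    rw [dvNotRB, Multiset.mem_filter] at hv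
    exact Finset.mem_filter.mpr ⟨Finset.mem_univ _, hv.2⟩
  have hineq : ∀ v ∈ Finset.univ.filter (fun x => x ∉ RB π),
      (dvNotRB π).count v
        + ((Finset.univ.filter (fun x => x ∉ RB π)).filter (· ≤ v)).card
        ≤ ((Finset.univ.filter (fun x => x ∉ RT π)).filter (· < v)).card :=
    fun v hv => main_ineq π hv
  obtain ⟨F, hbij, hinv, hgt⟩ := keyexists (Finset.univ.filter fun x => x ∉ RT π).card
    (Finset.univ.filter fun x => x ∉ RT π) (Finset.univ.filter fun x => x ∉ RB π)
    (dvNotRB π) rfl (card_AB π) hsupp hineq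
  have hmemA : ∀ x : Fin n, x ∉ RT π → x ∈ Finset.univ.filter (fun x => x ∉ RT π) :=
    fun x hx => Finset.mem_filter.mpr ⟨Finset.mem_univ _, hx⟩
  -- build the equivalence from F
  have hgdef : ∀ x : {x : Fin n // x ∉ RT π}, F (x : Fin n) ∉ RB π := by
    intro x
    have := hbij.1 (x : Fin n) (hmemA _ x.2)
    exact (Finset.mem_filter.mp this).2
  set g : {x : Fin n // x ∉ RT π} → {x : Fin n // x ∉ RB π} :=
    fun x => ⟨F (x : Fin n), hgdef x⟩ with hgdef2
  have hgbij : Function.Bijective g := by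
    constructor
    · intro x y h
      have h' : F (x : Fin n) = F (y : Fin n) := congrArg Subtype.val h
      exact Subtype.ext (hbij.2.1 _ (hmemA _ x.2) _ (hmemA _ y.2) h')
    · intro y
      obtain ⟨a, ha, hfa⟩ := hbij.2.2 (y : Fin n)
        (Finset.mem_filter.mpr ⟨Finset.mem_univ _, y.2⟩)
      exact ⟨⟨a, (Finset.mem_filter.mp ha).2⟩, Subtype.ext hfa⟩
  set e := Equiv.ofBijective g hgbij with hedef
  have hecoe : ∀ x : {x : Fin n // x ∉ RT π}, (e x : Fin n) = F (x : Fin n) := by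
    intro x; rfl
  have heliftF : ∀ a ∈ Finset.univ.filter (fun x => x ∉ RT π), liftF π e a = F a := by
    intro a ha
    have ha' := (Finset.mem_filter.mp ha).2
    rw [show a = ((⟨a, ha'⟩ : {x : Fin n // x ∉ RT π}) : Fin n) from rfl,
      liftF_coe π e ⟨a, ha'⟩, hecoe]
  have hechi : invBottomsE π e = dvNotRB π := by
    rw [bridge π e, invBotF_congr _ _ F heliftF, hinv]
  have huniq : ∀ f : {x : Fin n // x ∉ RT π} ≃ {x : Fin n // x ∉ RB π},
      invBottomsE π f = dvNotRB π → f = e := by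
    intro f hf
    have h1 := bijOnF_liftF π f
    have h2 := bijOnF_liftF π e
    have hif : invBotF (Finset.univ.filter fun x => x ∉ RT π) (liftF π f)
        = invBotF (Finset.univ.filter fun x => x ∉ RT π) (liftF π e) := by
      rw [← bridge π f, ← bridge π e, hf, hechi]
    have := keyuniq (Finset.univ.filter fun x => x ∉ RT π).card
      (Finset.univ.filter fun x => x ∉ RT π) (Finset.univ.filter fun x => x ∉ RB π)
      (liftF π f) (liftF π e) rfl (card_AB π) h1 h2 hif
    apply Equiv.ext
    intro x
    apply Subtype.ext
    have hx := this (x : Fin n) (hmemA _ x.2)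
    rw [liftF_coe π f x, liftF_coe π e x] at hx
    exact hx
  refine ⟨⟨e, hechi, huniq⟩, ?_⟩
  intro f hf x
  rw [huniq f hf, hecoe]
  exact hgt (x : Fin n) (hmemA _ x.2)
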